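/- Let K be a finite simplicial complex on V and R a commutative ring. For fixed j ≥ 0, consider the diagram F : cat(K)^op → Mod_R where F(σ) is the free R-module on monomials v^M with |M| = j and support of M contained in σ, and where the map for τ ⊇ σ fixes v^M if supp(M) ⊆ σ and sends it to 0 otherwise. Then F is fat: F(σ) → lim_{ρ ⊊ σ} F(ρ) is surjective for every face σ. -/

import Mathlib

open MvPolynomial

/-- The projection `R[x_v : v ∈ V] → R[x_v : v ∈ σ]` (realised inside `R[x_v : v ∈ V]`),
sending `x_v` to `x_v` if `v ∈ σ` and to `0` otherwise. -/
noncomputable def faceProj (R : Type*) [CommRing R] {V : Type*} [DecidableEq V]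
    (σ : Finset V) : MvPolynomial V R →ₐ[R] MvPolynomial V R :=
  aeval (fun v => if v ∈ σ then X v else 0)

lemma faceProj_monomial (R : Type*) [CommRing R] {V : Type*} [DecidableEq V]
    (τ : Finset V) (d : V →₀ ℕ) (c : R) :
    faceProj R τ (monomial d c) =
      if d.support ⊆ τ then monomial d c else 0 := by
  rw [faceProj, aeval_monomial]
  split_ifs with h
  · rw [monomial_eq]
    congr 1
    refine Finsupp.prod_congr fun v hv => ?_
    rw [if_pos (h hv)]
  · obtain ⟨v, hv, hvτ⟩ := Finset.not_subset.mp h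
    rw [Finsupp.prod, Finset.prod_eq_zero hv]
    · ring
    · rw [if_neg hvτ, zero_pow (Finsupp.mem_support_iff.mp hv)]

lemma faceProj_coeff (R : Type*) [CommRing R] {V : Type*} [DecidableEq V]
    (τ : Finset V) (q : MvPolynomial V R) (m : V →₀ ℕ) :
    coeff m (faceProj R τ q) = if m.support ⊆ τ then coeff m q else 0 := by
  conv_lhs => rw [q.as_sum]
  rw [map_sum]
  simp_rw [faceProj_monomial]
  rw [coeff_sum]
  have key : ∀ x ∈ q.support, (coeff m (if x.support ⊆ τ then monomial x (coeff x q) else 0)) =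
      if x = m then (if m.support ⊆ τ then coeff m q else 0) else 0 := by
    intro x _
    by_cases hx : x = m
    · subst hx; split_ifs <;> simp_all [coeff_monomial]
    · split_ifs <;> simp [coeff_monomial, hx]
  rw [Finset.sum_congr rfl key, Finset.sum_ite_eq' q.support m]
  by_cases hm : m ∈ q.support
  · rw [if_pos hm]
  · rw [if_neg hm, notMem_support_iff.mp hm]; simp

lemma coeff_filter (R : Type*) [CommRing R] {V : Type*}
    (P : (V →₀ ℕ) → Prop) [DecidablePred P] (q : MvPolynomial V R) (m : V →₀ ℕ) :
    coeff m (AddMonoidAlgebra.ofCoeff (Finsupp.filter P (AddMonoidAlgebra.coeff q)) : MvPolynomial V R) = if P m then coeff m q else 0 :=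
  Finsupp.filter_apply P (AddMonoidAlgebra.coeff q) m

/-- For a finite simplicial complex `K` on `V`, a commutative ring `R` and
`j ≥ 0`, the diagram `F : cat(K)^op → Mod_R` with `F(σ)` the free `R`-module on the
monomials `v^M` with `|M| = j` and `supp M ⊆ σ` (i.e. the degree-`j` homogeneous part of
`R[x_v : v ∈ σ]`), with projection transition maps, is fat: `F(σ) → lim_{ρ ⊊ σ} F(ρ)` is
surjective for every face `σ`. -/
theorem stmt_6 (R : Type*) [CommRing R] (V : Type*) [Fintype V] [DecidableEq V]
    (K : Finset (Finset V))
    (hdown : ∀ σ ∈ K, ∀ ρ ⊆ σ, ρ ∈ K) (hempty : ∅ ∈ K) (j : ℕ) :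
    ∀ σ ∈ K, ∀ u : (ρ : Finset V) → ρ ⊂ σ → MvPolynomial V R,
      -- the family takes values in `F(ρ)`
      (∀ ρ (hρ : ρ ⊂ σ), u ρ hρ ∈ supported R (↑ρ : Set V) ∧
          u ρ hρ ∈ homogeneousSubmodule V R j) →
      -- compatibility with the projection transition maps
      (∀ ρ ρ' (hρ : ρ ⊂ σ) (hρ' : ρ' ⊂ σ), ρ ⊆ ρ' →
          faceProj R ρ (u ρ' hρ') = u ρ hρ) →
      -- the family lifts to an element of `F(σ)`
      ∃ p : MvPolynomial V R, p ∈ supported R (↑σ : Set V) ∧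
        p ∈ homogeneousSubmodule V R j ∧
        ∀ ρ (hρ : ρ ⊂ σ), faceProj R ρ p = u ρ hρ := by
  intro σ hσ u hu hcompat
  classical
  have hsub : ∀ ρ ∈ σ.powerset.erase σ, ρ ⊂ σ := by
    intro ρ hρ
    rw [Finset.mem_erase, Finset.mem_powerset] at hρ
    exact lt_of_le_of_ne hρ.2 hρ.1
  set p : MvPolynomial V R := ∑ ρ ∈ (σ.powerset.erase σ).attach,
    (AddMonoidAlgebra.ofCoeff (Finsupp.filter (fun d : V →₀ ℕ => d.support = ρ.1) (AddMonoidAlgebra.coeff (u ρ.1 (hsub ρ.1 ρ.2)))) : MvPolynomial V R) with hp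
  -- key coefficient formula
  have hcoeff : ∀ m : V →₀ ℕ,
      coeff m p = if h : m.support ⊂ σ then coeff m (u m.support h) else 0 := by
    intro m
    rw [hp, coeff_sum]
    simp only [coeff_filter]
    by_cases h : m.support ⊂ σ
    · have hmem : m.support ∈ σ.powerset.erase σ := by
        rw [Finset.mem_erase, Finset.mem_powerset]
        exact ⟨h.ne, h.subset⟩
      rw [dif_pos h]
      rw [Finset.sum_eq_single_of_mem ⟨m.support, hmem⟩ (Finset.mem_attach _ _)]
      · rw [if_pos rfl]
      · intro b _ hb
        rw [if_neg]
        intro hbs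
        exact hb (Subtype.ext hbs.symm)
    · rw [dif_neg h]
      apply Finset.sum_eq_zero
      intro b _
      rw [if_neg]
      intro hbs
      exact h (hbs ▸ hsub b.1 b.2)
  -- support of nonzero coeffs
  have hsupp : ∀ m : V →₀ ℕ, coeff m p ≠ 0 → m.support ⊂ σ := by
    intro m hm
    by_contra h
    rw [hcoeff m, dif_neg h] at hm
    exact hm rfl
  refine ⟨p, ?_, ?_, ?_⟩
  · rw [mem_supported]
    intro v hv
    obtain ⟨d, hd, hvd⟩ := (mem_vars v).mp hv
    exact (hsupp d (mem_support_iff.mp hd)).subset hvd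
  · rw [mem_homogeneousSubmodule]
    intro d hd
    have h := hsupp d hd
    rw [hcoeff d, dif_pos h] at hd
    have h2 := (hu d.support h).2
    rw [mem_homogeneousSubmodule] at h2
    exact h2 hd
  · intro ρ hρ
    apply MvPolynomial.ext
    intro m
    rw [faceProj_coeff]
    by_cases hm : m.support ⊆ ρ
    · have h' : m.support ⊂ σ := lt_of_le_of_lt hm hρ
      rw [if_pos hm, hcoeff m, dif_pos h']
      have := congrArg (coeff m) (hcompat m.support ρ h' hρ hm)
      rw [faceProj_coeff, if_pos (subset_refl _)] at this
      exact this.symm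
    · rw [if_neg hm]
      by_contra hne
      have hmem : m ∈ (u ρ hρ).support := mem_support_iff.mpr fun h => hne h.symm
      apply hm
      intro v hv
      have hv' : v ∈ (u ρ hρ).vars := (mem_vars v).mpr ⟨m, hmem, hv⟩
      exact_mod_cast (mem_supported.mp (hu ρ hρ).1) hv'
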